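/- Let γ > 0, λ ≤ 0, g ∈ ℝ^d, ω_k ∈ ℝ^d with ‖g‖² − 2γλ > 0, let c ∈ ℝ^d with c ≠ 0, and define q(ω) = λ + ⟨g, ω − ω_k⟩ + (γ/2)‖ω − ω_k‖². Set μ₊ = ‖c‖ / √(‖g‖² − 2γλ) and ω₊ = ω_k + (1/γ)((1/μ₊)·c − g). Then: (a) q(ω₊) = 0; (b) c = μ₊·(g + γ(ω₊ − ω_k)) with μ₊ > 0 (the Karush–Kuhn–Tucker conditions hold at ω₊ with multiplier μ₊); and (c) ω₊ is the unique global maximizer of ⟨c,·⟩ over {ω : q(ω) ≤ 0}, i.e., ⟨c,ω⟩ < ⟨c,ω₊⟩ for every ω ≠ ω₊ with q(ω) ≤ 0. -/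

import Mathlib

open scoped RealInnerProductSpace

/-- **Explicit solution of the convex subproblem (the update rule).** With
`μ₊ = ‖c‖ / √(‖g‖² − 2γλ)` and `ω₊ = ω_k + (1/γ)((1/μ₊)c − g)`, the point `ω₊` lies on the
boundary of the model feasible set, satisfies the KKT conditions with multiplier `μ₊`, and
is the unique global maximizer of `⟨c,·⟩` over `{q ≤ 0}`. -/
theorem stmt_3 {d : ℕ} (γ lam : ℝ) (hγ : 0 < γ) (hlam : lam ≤ 0)
    (g ωk c : EuclideanSpace ℝ (Fin d)) (hc : c ≠ 0)
    (hpos : 0 < ‖g‖ ^ 2 - 2 * γ * lam)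
    (q : EuclideanSpace ℝ (Fin d) → ℝ)
    (hq : ∀ ω, q ω = lam + ⟪g, ω - ωk⟫ + γ / 2 * ‖ω - ωk‖ ^ 2)
    (μ : ℝ) (hμ : μ = ‖c‖ / Real.sqrt (‖g‖ ^ 2 - 2 * γ * lam))
    (ωp : EuclideanSpace ℝ (Fin d))
    (hωp : ωp = ωk + (1 / γ) • ((1 / μ) • c - g)) :
    q ωp = 0 ∧
    (0 < μ ∧ c = μ • (g + γ • (ωp - ωk))) ∧
    ∀ ω, q ω ≤ 0 → ω ≠ ωp → ⟪c, ω⟫ < ⟪c, ωp⟫ := by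
  have hcn : (0:ℝ) < ‖c‖ := norm_pos_iff.mpr hc
  have hs0 : 0 < Real.sqrt (‖g‖ ^ 2 - 2 * γ * lam) := Real.sqrt_pos.mpr hpos
  have hμ0 : 0 < μ := hμ ▸ div_pos hcn hs0
  have hc2 : ‖c‖ ^ 2 = μ ^ 2 * (‖g‖ ^ 2 - 2 * γ * lam) := by
    rw [hμ, div_pow, Real.sq_sqrt hpos.le, div_mul_cancel₀ _ hpos.ne']
  have hv : ωp - ωk = (1 / γ) • ((1 / μ) • c - g) := by
    rw [hωp, add_sub_cancel_left]
  have hkkt : c = μ • (g + γ • (ωp - ωk)) := by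
    rw [hv, smul_smul, mul_one_div_cancel hγ.ne', one_smul, add_sub_cancel, smul_smul,
      mul_one_div_cancel hμ0.ne', one_smul]
  have hgv : ⟪g, ωp - ωk⟫ = (1 / γ) * ((1 / μ) * ⟪g, c⟫ - ‖g‖ ^ 2) := by
    rw [hv, inner_smul_right, inner_sub_right, inner_smul_right, real_inner_self_eq_norm_sq]
  have hnv : ‖ωp - ωk‖ ^ 2 =
      (1 / γ) ^ 2 * ((1 / μ) ^ 2 * ‖c‖ ^ 2 - 2 * ((1 / μ) * ⟪g, c⟫) + ‖g‖ ^ 2) := by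
    rw [← real_inner_self_eq_norm_sq, hv]
    simp only [inner_smul_left, inner_smul_right, inner_sub_left, inner_sub_right,
      real_inner_self_eq_norm_sq, conj_trivial]
    rw [real_inner_comm c g]
    ring
  have hq0 : q ωp = 0 := by
    rw [hq, hgv, hnv]
    have h' : γ ≠ 0 := hγ.ne'
    have h'' : μ ≠ 0 := hμ0.ne'
    field_simp
    linear_combination hc2
  refine ⟨hq0, ⟨hμ0, hkkt⟩, ?_⟩
  intro ω hqw hne
  have h1 : ⟪g, ω - ωk⟫ ≤ -lam - γ / 2 * ‖ω - ωk‖ ^ 2 := by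
    rw [hq] at hqw; linarith
  have h2 : ⟪g, ωp - ωk⟫ = -lam - γ / 2 * ‖ωp - ωk‖ ^ 2 := by
    rw [hq] at hq0; linarith
  have hne' : (ω - ωk) - (ωp - ωk) ≠ 0 := by
    rw [sub_sub_sub_cancel_right, sub_ne_zero]; exact hne
  have h3 : 0 < ‖(ω - ωk) - (ωp - ωk)‖ ^ 2 :=
    pow_pos (norm_pos_iff.mpr hne') 2
  have h4 : ‖(ω - ωk) - (ωp - ωk)‖ ^ 2 =
      ‖ω - ωk‖ ^ 2 - 2 * ⟪ω - ωk, ωp - ωk⟫ + ‖ωp - ωk‖ ^ 2 := norm_sub_sq_real _ _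
  have hsub : ω - ωp = (ω - ωk) - (ωp - ωk) := by abel
  have hinner : ⟪c, ω - ωp⟫ =
      μ * (⟪g, ω - ωk⟫ - ⟪g, ωp - ωk⟫ + γ * ⟪ωp - ωk, ω - ωk⟫
        - γ * ⟪ωp - ωk, ωp - ωk⟫) := by
    rw [hkkt, hsub]
    simp only [inner_smul_left, inner_add_left, inner_sub_right, conj_trivial]
    ring
  have hcomm : ⟪ωp - ωk, ω - ωk⟫ = ⟪ω - ωk, ωp - ωk⟫ := real_inner_comm _ _
  have hself : ⟪ωp - ωk, ωp - ωk⟫ = ‖ωp - ωk‖ ^ 2 := real_inner_self_eq_norm_sq _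
  have hbound : ⟪g, ω - ωk⟫ - ⟪g, ωp - ωk⟫ + γ * ⟪ωp - ωk, ω - ωk⟫
      - γ * ⟪ωp - ωk, ωp - ωk⟫ ≤ -(γ / 2) * ‖(ω - ωk) - (ωp - ωk)‖ ^ 2 := by
    rw [hcomm, hself]
    have h4' : γ * ‖(ω - ωk) - (ωp - ωk)‖ ^ 2 =
        γ * (‖ω - ωk‖ ^ 2 - 2 * ⟪ω - ωk, ωp - ωk⟫ + ‖ωp - ωk‖ ^ 2) := by rw [h4]
    linarith [h1, h2, h4']
  have hneg : ⟪g, ω - ωk⟫ - ⟪g, ωp - ωk⟫ + γ * ⟪ωp - ωk, ω - ωk⟫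
      - γ * ⟪ωp - ωk, ωp - ωk⟫ < 0 := by
    have := mul_pos (half_pos hγ) h3
    nlinarith [hbound]
  have hlt : ⟪c, ω - ωp⟫ < 0 := by
    rw [hinner]
    exact mul_neg_of_pos_of_neg hμ0 hneg
  have := hlt
  rw [inner_sub_right] at this
  linarith
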